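/- Let H be an RKHA. A bounded linear functional χ on H, represented as χ(f) = ⟨f, ξ_χ⟩ via Riesz representation, is multiplicative (χ(fg) = χ(f)χ(g) for all f,g ∈ H) if and only if Δ(ξ_χ) = ξ_χ ⊗ ξ_χ. Hence the spectrum of H (nonzero multiplicative functionals) is in bijection with the cospectrum {ξ ∈ H\{0} : Δ(ξ) = ξ ⊗ ξ}, and this bijection is a homeomorphism for the weak-* and weak topologies. -/

import Mathlib

open scoped ComplexInnerProductSpace

noncomputable section

/-- An abstract Hilbert tensor product structure: a bilinear map `tmul` whose
elementary tensors satisfy the inner product identity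
`⟪a ⊗ b, c ⊗ d⟫ = ⟪a, c⟫ ⟪b, d⟫` and whose elementary tensors span a dense subspace. -/
structure TensorLike (H K HT : Type*) [NormedAddCommGroup H] [InnerProductSpace ℂ H]
    [NormedAddCommGroup K] [InnerProductSpace ℂ K]
    [NormedAddCommGroup HT] [InnerProductSpace ℂ HT] where
  tmul : H →ₗ[ℂ] K →ₗ[ℂ] HT
  inner_tmul : ∀ (a c : H) (b d : K),
    ⟪tmul a b, tmul c d⟫ = ⟪a, c⟫ * ⟪b, d⟫
  dense_span : Dense (Submodule.span ℂ (Set.range fun p : H × K => tmul p.1 p.2) : Set HT)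

/-- a bounded functional `χ = ⟪ξ_χ, ·⟫` on an RKHA is multiplicative iff
`Δ ξ_χ = ξ_χ ⊗ ξ_χ`; hence the spectrum (nonzero multiplicative functionals with the
weak-* topology) is homeomorphic to the cospectrum (with the weak topology). -/
theorem stmt_9 {H HT : Type*}
    [NormedAddCommGroup H] [InnerProductSpace ℂ H] [CompleteSpace H]
    [NormedAddCommGroup HT] [InnerProductSpace ℂ HT] [CompleteSpace HT]
    (T : TensorLike H H HT) (Δ : H →L[ℂ] HT) :
    (∀ ξ : H,
      (∀ f g : H, ⟪ξ, ContinuousLinearMap.adjoint Δ (T.tmul f g)⟫ = ⟪ξ, f⟫ * ⟪ξ, g⟫) ↔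
        Δ ξ = T.tmul ξ ξ) ∧
    (letI : TopologicalSpace {ξ : H // ξ ≠ 0 ∧ Δ ξ = T.tmul ξ ξ} :=
      TopologicalSpace.induced (fun ξ => toWeakSpace ℂ H ξ.1) inferInstance
     ∃ e : {χ : WeakDual ℂ H // χ ≠ 0 ∧ ∀ f g : H,
              χ (ContinuousLinearMap.adjoint Δ (T.tmul f g)) = χ f * χ g} ≃ₜ
            {ξ : H // ξ ≠ 0 ∧ Δ ξ = T.tmul ξ ξ},
       ∀ (χ : {χ : WeakDual ℂ H // χ ≠ 0 ∧ ∀ f g : H,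
              χ (ContinuousLinearMap.adjoint Δ (T.tmul f g)) = χ f * χ g}) (f : H),
         χ.1 f = ⟪((e χ : {ξ : H // ξ ≠ 0 ∧ Δ ξ = T.tmul ξ ξ}) : H), f⟫) := by
  have key : ∀ ξ : H,
      (∀ f g : H, ⟪ξ, ContinuousLinearMap.adjoint Δ (T.tmul f g)⟫ = ⟪ξ, f⟫ * ⟪ξ, g⟫) ↔
        Δ ξ = T.tmul ξ ξ := by
    intro ξ
    constructor
    · intro h
      have hz : (innerSL ℂ (Δ ξ) : HT →L[ℂ] ℂ) = innerSL ℂ (T.tmul ξ ξ) := by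
        refine ContinuousLinearMap.ext_on T.dense_span ?_
        rintro _ ⟨⟨f, g⟩, rfl⟩
        simp only [innerSL_apply_apply]
        rw [← ContinuousLinearMap.adjoint_inner_right, h f g, T.inner_tmul]
      have := congrArg (fun φ : HT →L[ℂ] ℂ => φ (Δ ξ - T.tmul ξ ξ)) hz
      simp only [innerSL_apply_apply] at this
      have h2 : ⟪Δ ξ - T.tmul ξ ξ, Δ ξ - T.tmul ξ ξ⟫ = 0 := by
        rw [inner_sub_left, this, sub_self]
      exact sub_eq_zero.mp (inner_self_eq_zero.mp h2)
    · intro h f g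
      rw [ContinuousLinearMap.adjoint_inner_right, h, T.inner_tmul]
  refine ⟨key, ?_⟩
  set Φ := InnerProductSpace.toDual ℂ H with hΦ
  -- equiv
  have fwd_prop : ∀ χ : {χ : WeakDual ℂ H // χ ≠ 0 ∧ ∀ f g : H,
        χ (ContinuousLinearMap.adjoint Δ (T.tmul f g)) = χ f * χ g},
      Φ.symm χ.1 ≠ 0 ∧ Δ (Φ.symm χ.1) = T.tmul (Φ.symm χ.1) (Φ.symm χ.1) := by
    intro χ
    have happ : ∀ f : H, χ.1 f = ⟪Φ.symm χ.1, f⟫ := by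
      intro f
      rw [← InnerProductSpace.toDual_apply_apply (𝕜 := ℂ)]
      exact (congrArg (fun φ : StrongDual ℂ H => φ f) (Φ.apply_symm_apply χ.1)).symm
    constructor
    · exact fun h0 => χ.2.1 (Φ.symm.map_eq_zero_iff.mp h0)
    · refine (key _).mp ?_
      intro f g
      rw [← happ, ← happ, ← happ]
      exact χ.2.2 f g
  have bwd_prop : ∀ ξ : {ξ : H // ξ ≠ 0 ∧ Δ ξ = T.tmul ξ ξ},
      (Φ ξ.1 : WeakDual ℂ H) ≠ 0 ∧ ∀ f g : H,
        (Φ ξ.1 : WeakDual ℂ H) (ContinuousLinearMap.adjoint Δ (T.tmul f g)) =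
          (Φ ξ.1 : WeakDual ℂ H) f * (Φ ξ.1 : WeakDual ℂ H) g := by
    intro ξ
    have happ : ∀ f : H, (Φ ξ.1 : WeakDual ℂ H) f = ⟪ξ.1, f⟫ := fun f =>
      InnerProductSpace.toDual_apply_apply
    constructor
    · exact fun h0 => ξ.2.1 (Φ.map_eq_zero_iff.mp h0)
    · intro f g
      rw [happ, happ, happ]
      exact (key ξ.1).mpr ξ.2.2 f g
  letI tcos : TopologicalSpace {ξ : H // ξ ≠ 0 ∧ Δ ξ = T.tmul ξ ξ} :=
    TopologicalSpace.induced (fun ξ => toWeakSpace ℂ H ξ.1) inferInstance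
  let E : {χ : WeakDual ℂ H // χ ≠ 0 ∧ ∀ f g : H,
              χ (ContinuousLinearMap.adjoint Δ (T.tmul f g)) = χ f * χ g} ≃
            {ξ : H // ξ ≠ 0 ∧ Δ ξ = T.tmul ξ ξ} :=
  { toFun := fun χ => ⟨Φ.symm χ.1, fwd_prop χ⟩
    invFun := fun ξ => ⟨Φ ξ.1, bwd_prop ξ⟩
    left_inv := fun χ => Subtype.ext (Φ.apply_symm_apply χ.1)
    right_inv := fun ξ => Subtype.ext (Φ.symm_apply_apply ξ.1) }
  have cont_fwd : Continuous E := by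
    rw [continuous_induced_rng]
    refine WeakBilin.continuous_of_continuous_eval _ ?_
    intro l
    refine (Complex.continuous_conj.comp
      ((WeakBilin.eval_continuous (topDualPairing ℂ H) (Φ.symm l)).comp
        (continuous_subtype_val (p := fun χ : WeakDual ℂ H => χ ≠ 0 ∧ ∀ f g : H,
              χ (ContinuousLinearMap.adjoint Δ (T.tmul f g)) = χ f * χ g)))).congr ?_
    intro χ
    show (starRingEnd ℂ) ((topDualPairing ℂ H) χ.1 (Φ.symm l)) =
      (topDualPairing ℂ H).flip ((toWeakSpace ℂ H) (Φ.symm χ.1)) l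
    have h1 : (topDualPairing ℂ H).flip ((toWeakSpace ℂ H) (Φ.symm χ.1)) l
        = ⟪Φ.symm l, Φ.symm χ.1⟫ := by
      show l (Φ.symm χ.1) = _
      rw [← InnerProductSpace.toDual_apply_apply (𝕜 := ℂ), Φ.apply_symm_apply]
    have h2 : (topDualPairing ℂ H) χ.1 (Φ.symm l) = ⟪Φ.symm χ.1, Φ.symm l⟫ := by
      show (show WeakDual ℂ H from χ.1) (Φ.symm l) = _
      rw [← InnerProductSpace.toDual_apply_apply (𝕜 := ℂ)]
      exact (congrArg (fun φ : StrongDual ℂ H => φ (Φ.symm l)) (Φ.apply_symm_apply χ.1)).symm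
      try rfl
    rw [h1, h2, ← inner_conj_symm]
    exact Complex.conj_conj _
  have cont_bwd : Continuous E.symm := by
    refine Continuous.subtype_mk ?_ _
    refine WeakBilin.continuous_of_continuous_eval _ ?_
    intro y
    refine (Complex.continuous_conj.comp
      ((WeakBilin.eval_continuous ((topDualPairing ℂ H).flip) (Φ y)).comp
        continuous_induced_dom)).congr ?_
    intro ξ
    show (starRingEnd ℂ) ((topDualPairing ℂ H).flip ((toWeakSpace ℂ H) ξ.1) (Φ y)) =
      (topDualPairing ℂ H) (Φ ξ.1) y
    have h1 : (topDualPairing ℂ H).flip ((toWeakSpace ℂ H) ξ.1) (Φ y) = ⟪y, ξ.1⟫ := by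
      show (Φ y) ξ.1 = _
      rw [InnerProductSpace.toDual_apply_apply]
    have h2 : (topDualPairing ℂ H) (Φ ξ.1) y = ⟪ξ.1, y⟫ := by
      show (show WeakDual ℂ H from Φ ξ.1) y = _
      rw [show ((show WeakDual ℂ H from Φ ξ.1) y) = (Φ ξ.1) y from rfl,
        InnerProductSpace.toDual_apply_apply]
    rw [h1, h2, inner_conj_symm]
  refine ⟨⟨E, cont_fwd, cont_bwd⟩, ?_⟩
  intro χ f
  show χ.1 f = ⟪Φ.symm χ.1, f⟫
  rw [← InnerProductSpace.toDual_apply_apply (𝕜 := ℂ)]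
  exact (congrArg (fun φ : StrongDual ℂ H => φ f) (Φ.apply_symm_apply χ.1)).symm
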